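/- Let ρ be a normalized proximate order function with limit ρ₀ > 0 and let f be an entire function on ℂ with supremum norm M(r,f) = sup_{|z| ≤ r}|f(z)|. If ‖f‖_{ρ,σ} := sup_{z ∈ ℂ} |f(z)|·exp(−σ·|z|^{ρ(|z|)}) < ∞ for some σ > 0, then there exists a constant k > 0 depending only on ρ₀, and for each σ a constant C(σ) > 0, such that for every ℓ ∈ ℕ₀: (1/ℓ!)·‖f^{(ℓ)}‖_{ρ, k·σ} ≤ C(σ)·‖f‖_{ρ,σ}·(2kσ)^{ℓ/ρ₀} / G_ℓ, where G_ℓ = φ(ℓ)^ℓ/(e·ρ₀)^{ℓ/ρ₀} and φ is the inverse of r ↦ r^{ρ(r)}. -/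

import Mathlib

open Filter Real Metric Finset



lemma cauchy_est (f : ℂ → ℂ) (hf : Differentiable ℂ f) (z : ℂ) (r : ℝ) (hr : 0 < r)
    (B : ℝ) (hB : ∀ w : ℂ, dist w z ≤ r → ‖f w‖ ≤ B) (ℓ : ℕ) :
    ‖iteratedDeriv ℓ f z‖ ≤ (ℓ.factorial : ℝ) * B / r ^ ℓ := by
  have hB0 : 0 ≤ B := le_trans (norm_nonneg _) (hB z (by simp [hr.le]))
  lift r to NNReal using hr.le with r' hr'
  have hr0 : 0 < r' := by exact_mod_cast hr
  have hps : HasFPowerSeriesOnBall f (cauchyPowerSeries f z r') z ⊤ :=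
    hf.hasFPowerSeriesOnBall z hr0
  have key : (ℓ.factorial : ℂ) • (cauchyPowerSeries f z r' ℓ fun _ => (1:ℂ))
      = iteratedDeriv ℓ f z := by
    rw [iteratedDeriv_eq_iteratedFDeriv, ← hps.factorial_smul (1:ℂ) ℓ]
    simp [nsmul_eq_mul]
  have hnorm : ‖cauchyPowerSeries f z r' ℓ‖ ≤ B * ((r':ℝ))⁻¹ ^ ℓ := by
    refine le_trans (norm_cauchyPowerSeries_le f z r' ℓ) ?_
    rw [abs_of_nonneg (le_of_lt (by exact_mod_cast hr : (0:ℝ) < r'))]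
    gcongr
    have hint : (∫ θ : ℝ in (0)..2 * Real.pi, ‖f (circleMap z r' θ)‖) ≤
        ∫ _ : ℝ in (0)..2 * Real.pi, B := by
      apply intervalIntegral.integral_mono_on Real.two_pi_pos.le
      · exact ((hf.continuous.comp (continuous_circleMap z r')).norm).intervalIntegrable _ _
      · exact intervalIntegrable_const
      · intro θ _
        exact hB _ (by
          have := circleMap_mem_sphere z (by exact_mod_cast hr.le : (0:ℝ) ≤ r') θ
          simp only [mem_sphere] at this
          rw [this])
    rw [intervalIntegral.integral_const, smul_eq_mul] at hint
    calc (2 * Real.pi)⁻¹ * ∫ θ : ℝ in (0)..2 * Real.pi, ‖f (circleMap z r' θ)‖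
        ≤ (2 * Real.pi)⁻¹ * ((2 * Real.pi - 0) * B) :=
          mul_le_mul_of_nonneg_left hint (by positivity)
        _ = B := by
          field_simp
          ring
  have h1 : ‖iteratedDeriv ℓ f z‖ ≤ (ℓ.factorial : ℝ) * (B * ((r':ℝ))⁻¹ ^ ℓ) := by
    rw [← key]
    rw [show ‖(ℓ.factorial : ℂ) • (cauchyPowerSeries f z r' ℓ fun _ => (1:ℂ))‖
        = ‖(ℓ.factorial : ℂ) • (cauchyPowerSeries f z r' ℓ fun _ => (1:ℂ))‖ from rfl]
    rw [norm_smul]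
    simp only [Complex.norm_natCast]
    gcongr
    · exact le_trans (le_trans ((cauchyPowerSeries f z r' ℓ).le_opNorm _) (by simp)) hnorm
  calc ‖iteratedDeriv ℓ f z‖ ≤ (ℓ.factorial : ℝ) * (B * ((r':ℝ))⁻¹ ^ ℓ) := h1
    _ = (ℓ.factorial : ℝ) * B / (r':ℝ) ^ ℓ := by
        rw [inv_pow]
        ring


lemma h_hasDeriv (ρ : ℝ → ℝ) (hdiff : Differentiable ℝ ρ) (s : ℝ) :
    HasDerivAt (fun u => ρ (Real.exp u) * u)
      (deriv ρ (Real.exp s) * Real.exp s * s + ρ (Real.exp s)) s := by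
  have h1 : HasDerivAt (fun u => ρ (Real.exp u)) (deriv ρ (Real.exp s) * Real.exp s) s :=
    (hdiff (Real.exp s)).hasDerivAt.comp s (Real.hasDerivAt_exp s)
  simpa [Pi.mul_def] using h1.mul (hasDerivAt_id s)

lemma mvt_bound (ρ : ℝ → ℝ) (ρ₀ : ℝ) (hdiff : Differentiable ℝ ρ)
    (hlim : Tendsto ρ atTop (nhds ρ₀))
    (hder : Tendsto (fun r => deriv ρ r * r * Real.log r) atTop (nhds 0))
    (ε : ℝ) (hε : 0 < ε) :
    ∃ S : ℝ, ∀ x y : ℝ, S ≤ x → S ≤ y → x < y →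
      (ρ₀ - ε) * (y - x) ≤ ρ (Real.exp y) * y - ρ (Real.exp x) * x ∧
      ρ (Real.exp y) * y - ρ (Real.exp x) * x ≤ (ρ₀ + ε) * (y - x) := by
  set D : ℝ → ℝ := fun s => deriv ρ (Real.exp s) * Real.exp s * s + ρ (Real.exp s) with hD
  have hDlim : Tendsto D atTop (nhds ρ₀) := by
    have h1 : Tendsto (fun s => deriv ρ (Real.exp s) * Real.exp s * Real.log (Real.exp s))
        atTop (nhds 0) := hder.comp Real.tendsto_exp_atTop
    simp only [Real.log_exp] at h1
    simpa using h1.add (hlim.comp Real.tendsto_exp_atTop)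
  obtain ⟨S, hS⟩ := (Metric.tendsto_atTop.mp hDlim) ε hε
  refine ⟨S, fun x y hx hy hxy => ?_⟩
  have hcont : ContinuousOn (fun u => ρ (Real.exp u) * u) (Set.Icc x y) :=
    (Continuous.mul ((hdiff.continuous).comp Real.continuous_exp) continuous_id).continuousOn
  obtain ⟨c, hc, hceq⟩ := exists_hasDerivAt_eq_slope (fun u => ρ (Real.exp u) * u) D hxy hcont
    (fun u _ => h_hasDeriv ρ hdiff u)
  have hcS : S ≤ c := le_trans hx hc.1.le
  have hdist := hS c hcS
  rw [Real.dist_eq] at hdist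
  have h1 : ρ₀ - ε ≤ D c := by cases abs_lt.mp hdist; linarith
  have h2 : D c ≤ ρ₀ + ε := by cases abs_lt.mp hdist; linarith
  have heq : ρ (Real.exp y) * y - ρ (Real.exp x) * x = D c * (y - x) := by
    rw [hceq, div_mul_cancel₀]
    exact sub_ne_zero.mpr hxy.ne'
  constructor
  · rw [heq]; nlinarith [sub_pos.mpr hxy]
  · rw [heq]; nlinarith [sub_pos.mpr hxy]


lemma V_log (ρ : ℝ → ℝ) (s : ℝ) (hs : 0 < s) :
    s ^ ρ s = Real.exp (ρ (Real.exp (Real.log s)) * Real.log s) := by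
  rw [Real.exp_log hs, Real.rpow_def_of_pos hs, mul_comm]

lemma doubling (ρ : ℝ → ℝ) (ρ₀ : ℝ) (hρ₀ : 0 < ρ₀) (hdiff : Differentiable ℝ ρ)
    (hlim : Tendsto ρ atTop (nhds ρ₀))
    (hder : Tendsto (fun r => deriv ρ r * r * Real.log r) atTop (nhds 0))
    (hmono : StrictMonoOn (fun r => r ^ ρ r) (Set.Ioi (0:ℝ))) :
    ∃ k₀ A : ℝ, 1 ≤ k₀ ∧ 0 ≤ A ∧
      ∀ s : ℝ, 0 < s → (2*s) ^ ρ (2*s) ≤ k₀ * s ^ ρ s + A := by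
  obtain ⟨S, hS⟩ := mvt_bound ρ ρ₀ hdiff hlim hder 1 one_pos
  have hVmono : ∀ a b : ℝ, 0 < a → a ≤ b → a ^ ρ a ≤ b ^ ρ b := by
    intro a b ha hab
    rcases eq_or_lt_of_le hab with h | h
    · rw [h]
    · exact (hmono (Set.mem_Ioi.mpr ha) (Set.mem_Ioi.mpr (ha.trans h)) h).le
  set R₀ : ℝ := max (Real.exp S) 1 with hR₀
  have hR₀pos : 0 < R₀ := lt_of_lt_of_le one_pos (le_max_right _ _)
  refine ⟨(2:ℝ) ^ (ρ₀ + 1), (2*R₀) ^ ρ (2*R₀), ?_, ?_, ?_⟩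
  · exact Real.one_le_rpow one_le_two (by linarith)
  · exact Real.rpow_nonneg (by linarith) _
  intro s hs
  rcases le_or_gt s R₀ with hcase | hcase
  · have h1 : (2*s) ^ ρ (2*s) ≤ (2*R₀) ^ ρ (2*R₀) :=
      hVmono _ _ (by linarith) (by linarith)
    have h2 : 0 ≤ (2:ℝ) ^ (ρ₀ + 1) * s ^ ρ s :=
      mul_nonneg (Real.rpow_nonneg (by norm_num) _) (Real.rpow_nonneg hs.le _)
    linarith
  · -- s > R₀ ≥ exp S, use MVT on [log s, log (2s)]
    have hsS : S ≤ Real.log s := by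
      have : Real.exp S ≤ s := le_trans (le_max_left _ _) hcase.le
      calc S = Real.log (Real.exp S) := (Real.log_exp S).symm
        _ ≤ Real.log s := Real.log_le_log (Real.exp_pos S) this
    have h2s : Real.log (2*s) = Real.log 2 + Real.log s := Real.log_mul (by norm_num) (by linarith)
    have hlt : Real.log s < Real.log (2*s) := by
      rw [h2s]; linarith [Real.log_pos one_lt_two]
    obtain ⟨_, hub⟩ := hS (Real.log s) (Real.log (2*s)) hsS (by linarith [hlt]) hlt
    have key : ρ (Real.exp (Real.log (2*s))) * Real.log (2*s)
        ≤ ρ (Real.exp (Real.log s)) * Real.log s + (ρ₀ + 1) * Real.log 2 := by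
      have : Real.log (2*s) - Real.log s = Real.log 2 := by rw [h2s]; ring
      nlinarith [hub, this]
    calc (2*s) ^ ρ (2*s) = Real.exp (ρ (Real.exp (Real.log (2*s))) * Real.log (2*s)) :=
          V_log ρ _ (by linarith)
      _ ≤ Real.exp (ρ (Real.exp (Real.log s)) * Real.log s + (ρ₀ + 1) * Real.log 2) :=
          Real.exp_le_exp.mpr key
      _ = (2:ℝ) ^ (ρ₀ + 1) * s ^ ρ s := by
          rw [Real.exp_add, ← V_log ρ s hs, Real.rpow_def_of_pos (by norm_num : (0:ℝ) < 2)]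
          ring_nf
      _ ≤ (2:ℝ) ^ (ρ₀ + 1) * s ^ ρ s + (2*R₀) ^ ρ (2*R₀) := by
          have := Real.rpow_nonneg (by linarith : (0:ℝ) ≤ 2*R₀) (ρ (2*R₀))
          linarith
lemma ratio_bound (ρ : ℝ → ℝ) (ρ₀ : ℝ) (hρ₀ : 0 < ρ₀) (hdiff : Differentiable ℝ ρ)
    (hlim : Tendsto ρ atTop (nhds ρ₀))
    (hder : Tendsto (fun r => deriv ρ r * r * Real.log r) atTop (nhds 0))
    (hmono : StrictMonoOn (fun r => r ^ ρ r) (Set.Ioi (0:ℝ)))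
    (φ : ℝ → ℝ) (hφpos : ∀ t, 0 < t → 0 < φ t)
    (hφp : ∀ t, 0 < t → (φ t) ^ ρ (φ t) = t)
    (σ : ℝ) (hσ : 0 < σ) :
    ∃ L : ℕ, 1 ≤ L ∧ ∀ ℓ : ℕ, L ≤ ℓ →
      φ (ℓ : ℝ) ≤ Real.exp (Real.log 2 + Real.log σ / ρ₀) * φ ((ℓ : ℝ)/σ) := by
  set c : ℝ := Real.log 2 + Real.log σ / ρ₀ with hc
  have hl2 : 0 < Real.log 2 := Real.log_pos one_lt_two
  set ε : ℝ := ρ₀ * Real.log 2 / (2 * (|c| + 1)) with hε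
  have hεpos : 0 < ε := by positivity
  have hεc : ε * |c| ≤ ρ₀ * Real.log 2 / 2 := by
    rw [hε, div_mul_eq_mul_div, div_le_div_iff₀ (by positivity) (by norm_num)]
    nlinarith [abs_nonneg c]
  obtain ⟨S, hS⟩ := mvt_bound ρ ρ₀ hdiff hlim hder ε hεpos
  set R : ℝ := Real.exp (S + |c|) with hR
  have hRpos : 0 < R := Real.exp_pos _
  set L : ℕ := max 1 ⌈σ * (R ^ ρ R + 1)⌉₊ with hL
  refine ⟨L, le_max_left _ _, fun ℓ hℓ => ?_⟩
  have hℓ1 : 1 ≤ ℓ := le_trans (le_max_left _ _) hℓ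
  have hℓpos : (0:ℝ) < ℓ := by exact_mod_cast hℓ1
  have hu : 0 < (ℓ:ℝ)/σ := by positivity
  set r : ℝ := φ ((ℓ:ℝ)/σ) with hr
  have hrpos : 0 < r := hφpos _ hu
  have hVr : r ^ ρ r = (ℓ:ℝ)/σ := hφp _ hu
  -- r > R
  have hℓL : σ * (R ^ ρ R + 1) ≤ (ℓ:ℝ) := by
    calc σ * (R ^ ρ R + 1) ≤ (⌈σ * (R ^ ρ R + 1)⌉₊ : ℝ) := Nat.le_ceil _
      _ ≤ (L:ℝ) := by exact_mod_cast le_max_right 1 _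
      _ ≤ (ℓ:ℝ) := by exact_mod_cast hℓ
  have hrR : R < r := by
    by_contra h
    push_neg at h
    have : r ^ ρ r ≤ R ^ ρ R := by
      rcases eq_or_lt_of_le h with h' | h'
      · rw [h']
      · exact (hmono (Set.mem_Ioi.mpr hrpos) (Set.mem_Ioi.mpr hRpos) h').le
    rw [hVr] at this
    have h2 : (ℓ:ℝ) ≤ σ * R ^ ρ R := by
      rwa [div_le_iff₀ hσ, mul_comm] at this
    nlinarith
  have hx : S + |c| ≤ Real.log r := by
    calc S + |c| = Real.log R := (Real.log_exp _).symm
      _ ≤ Real.log r := Real.log_le_log hRpos hrR.le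
  set x : ℝ := Real.log r with hxdef
  -- key : h(x+c) - h(x) ≥ log σ
  have hkey : ρ₀ * c - ε * |c| ≤ ρ (Real.exp (x + c)) * (x + c) - ρ (Real.exp x) * x := by
    rcases lt_trichotomy c 0 with hc0 | hc0 | hc0
    · have h1 := (hS (x + c) x (by rw [abs_of_neg hc0] at hx; linarith)
        (by linarith [abs_nonneg c]) (by linarith)).2
      rw [abs_of_neg hc0]
      nlinarith [h1]
    · simp [hc0]
    · have h1 := (hS x (x + c) (by linarith [abs_nonneg c])
        (by linarith [abs_nonneg c]) (by linarith)).1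
      rw [abs_of_pos hc0]
      nlinarith [h1]
  have hρc : ρ₀ * c = ρ₀ * Real.log 2 + Real.log σ := by
    rw [hc]; field_simp
  have hkey2 : Real.log σ ≤ ρ (Real.exp (x + c)) * (x + c) - ρ (Real.exp x) * x := by
    nlinarith [hkey, hεc, hρc]
  -- translate to V
  set r' : ℝ := Real.exp c * r with hr'
  have hr'pos : 0 < r' := by positivity
  have hexp : Real.exp (x + c) = r' := by
    rw [Real.exp_add, Real.exp_log hrpos, hr']; ring
  have hVr' : σ * ((ℓ:ℝ)/σ) ≤ r' ^ ρ r' := by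
    have e1 : r' ^ ρ r' = Real.exp (ρ (Real.exp (Real.log r')) * Real.log r') := V_log ρ _ hr'pos
    have e2 : Real.log r' = x + c := by rw [← hexp, Real.log_exp]
    rw [e1, e2]
    have e3 : r ^ ρ r = Real.exp (ρ (Real.exp x) * x) := V_log ρ _ hrpos
    calc σ * ((ℓ:ℝ)/σ) = σ * (r ^ ρ r) := by rw [hVr]
      _ = Real.exp (Real.log σ + ρ (Real.exp x) * x) := by
          rw [Real.exp_add, Real.exp_log hσ, e3]
      _ ≤ Real.exp (ρ (Real.exp (x+c)) * (x + c)) := by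
          rw [Real.exp_le_exp]
          linarith [hkey2]
  have hVℓ : (ℓ:ℝ) ≤ r' ^ ρ r' := by
    have : σ * ((ℓ:ℝ)/σ) = (ℓ:ℝ) := by field_simp
    linarith [hVr']
  -- conclude φ ℓ ≤ r'
  by_contra hcon
  push_neg at hcon
  have hφℓpos : 0 < φ (ℓ:ℝ) := hφpos _ hℓpos
  have := hmono (Set.mem_Ioi.mpr hr'pos) (Set.mem_Ioi.mpr hφℓpos) hcon
  simp only at this
  rw [hφp _ hℓpos] at this
  linarith
set_option maxHeartbeats 1000000 in
theorem stmt_13 (ρ : ℝ → ℝ) (ρ₀ : ℝ) (hρ₀ : 0 < ρ₀)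
    (hdiff : Differentiable ℝ ρ)
    (hpos : ∀ r, 0 ≤ r → 0 ≤ ρ r)
    (hlim : Filter.Tendsto ρ Filter.atTop (nhds ρ₀))
    (hder : Filter.Tendsto (fun r => deriv ρ r * r * Real.log r) Filter.atTop (nhds 0))
    (hmono : StrictMonoOn (fun r => r ^ ρ r) (Set.Ioi (0:ℝ)))
    (hzero : Filter.Tendsto (fun r => r ^ ρ r) (nhdsWithin 0 (Set.Ioi 0)) (nhds 0))
    (φ : ℝ → ℝ) (hφpos : ∀ t, 0 < t → 0 < φ t)
    (hφ : ∀ r, 0 < r → φ (r ^ ρ r) = r)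
    (hφp : ∀ t, 0 < t → (φ t) ^ ρ (φ t) = t)
    (G : ℕ → ℝ) (hG0 : G 0 = 1)
    (hG : ∀ ℓ : ℕ, 0 < ℓ → G ℓ = φ (ℓ : ℝ) ^ ℓ / (Real.exp 1 * ρ₀) ^ ((ℓ : ℝ) / ρ₀)) :
    ∃ k > (0:ℝ), ∀ σ > (0:ℝ), ∃ C > (0:ℝ), ∀ f : ℂ → ℂ, Differentiable ℂ f →
      ∀ M : ℝ,
        (∀ z : ℂ, ‖f z‖ ≤ M * Real.exp (σ * ‖z‖ ^ ρ (‖z‖))) →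
        ∀ ℓ : ℕ, ∀ z : ℂ,
          ‖iteratedDeriv ℓ f z‖ / (ℓ.factorial : ℝ)
              * Real.exp (-(k * σ) * ‖z‖ ^ ρ (‖z‖)) ≤
            C * M * (2 * k * σ) ^ ((ℓ : ℝ) / ρ₀) / G ℓ := by
  have hVmono : ∀ a b : ℝ, 0 < a → a ≤ b → a ^ ρ a ≤ b ^ ρ b := by
    intro a b ha hab
    rcases eq_or_lt_of_le hab with h | h
    · rw [h]
    · exact (hmono (Set.mem_Ioi.mpr ha) (Set.mem_Ioi.mpr (ha.trans h)) h).le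
  obtain ⟨k₀, A, hk₀, hA, hdoub⟩ := doubling ρ ρ₀ hρ₀ hdiff hlim hder hmono
  set k : ℝ := max k₀ ((2 * Real.exp k₀) ^ ρ₀ / (2 * Real.exp 1 * ρ₀)) with hk
  have hkk₀ : k₀ ≤ k := le_max_left _ _
  have hk1 : 1 ≤ k := le_trans hk₀ hkk₀
  have hkpos : (0:ℝ) < k := lt_of_lt_of_le one_pos hk1
  refine ⟨k, hkpos, fun σ hσ => ?_⟩
  obtain ⟨L, hL1, hLrat⟩ := ratio_bound ρ ρ₀ hρ₀ hdiff hlim hder hmono φ hφpos hφp σ hσ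
  set b : ℝ := 2 * k * σ * (Real.exp 1 * ρ₀) with hbdef
  have hbpos : 0 < b := by positivity
  set W : ℝ := b ^ (1/ρ₀) with hWdef
  have hWpos : 0 < W := Real.rpow_pos_of_pos hbpos _
  have hId1 : ∀ ℓ : ℕ, (2*k*σ) ^ ((ℓ:ℝ)/ρ₀) * (Real.exp 1 * ρ₀) ^ ((ℓ:ℝ)/ρ₀) = W ^ ℓ := by
    intro ℓ
    rw [hWdef, ← Real.mul_rpow (by positivity) (by positivity),
      ← Real.rpow_natCast (b ^ (1/ρ₀)) ℓ, ← Real.rpow_mul hbpos.le]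
    congr 1
    · ring
  have hId2 : Real.exp k₀ * Real.exp (Real.log 2 + Real.log σ / ρ₀) ≤ W := by
    set a : ℝ := Real.exp k₀ * Real.exp (Real.log 2 + Real.log σ / ρ₀) with hadef
    have hapos : 0 < a := by positivity
    have ha_eq : a = 2 * Real.exp k₀ * σ ^ (1/ρ₀) := by
      rw [hadef, Real.exp_add, Real.exp_log (by norm_num : (0:ℝ) < 2),
        Real.rpow_def_of_pos hσ]
      rw [show Real.log σ * (1/ρ₀) = Real.log σ / ρ₀ by ring]
      ring
    have harpow : a ^ ρ₀ ≤ b := by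
      rw [ha_eq, Real.mul_rpow (by positivity) (Real.rpow_nonneg hσ.le _),
        ← Real.rpow_mul hσ.le, one_div_mul_cancel hρ₀.ne', Real.rpow_one]
      have hkge : (2 * Real.exp k₀) ^ ρ₀ / (2 * Real.exp 1 * ρ₀) ≤ k := le_max_right _ _
      have h2 : (2 * Real.exp k₀) ^ ρ₀ ≤ k * (2 * Real.exp 1 * ρ₀) := by
        rw [div_le_iff₀ (by positivity)] at hkge
        linarith
      have h3 := mul_le_mul_of_nonneg_right h2 hσ.le
      rw [hbdef]
      nlinarith [h3]
    calc a = (a ^ ρ₀) ^ (1/ρ₀) := by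
          rw [← Real.rpow_mul hapos.le, mul_one_div_cancel hρ₀.ne', Real.rpow_one]
      _ ≤ b ^ (1/ρ₀) := Real.rpow_le_rpow (Real.rpow_nonneg hapos.le _) harpow (by positivity)
  set Q : ℕ → ℝ := fun j => Real.exp k₀ * φ (j:ℝ) / (φ ((j:ℝ)/σ) * W) with hQdef
  have hQpos : ∀ j : ℕ, 1 ≤ j → 0 < Q j := by
    intro j hj
    have hjpos : (0:ℝ) < (j:ℝ) := by exact_mod_cast hj
    have h1 := hφpos _ hjpos
    have h2 := hφpos _ (by positivity : (0:ℝ) < (j:ℝ)/σ)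
    rw [hQdef]
    positivity
  have hQpow_nonneg : ∀ j : ℕ, 0 ≤ Q j ^ j := by
    intro j
    rcases Nat.eq_zero_or_pos j with h | h
    · subst h; norm_num
    · exact pow_nonneg (hQpos j h).le j
  set C : ℝ := Real.exp (σ*(A+1)) * (1 + ∑ j ∈ Finset.range (L+1), Q j ^ j) with hCdef
  have hsum_nonneg : 0 ≤ ∑ j ∈ Finset.range (L+1), Q j ^ j :=
    Finset.sum_nonneg fun j _ => hQpow_nonneg j
  have hexpA : 1 ≤ Real.exp (σ*(A+1)) := by
    rw [show (1:ℝ) = Real.exp 0 by simp]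
    exact Real.exp_le_exp.mpr (by positivity)
  have hC1 : 1 ≤ C := by
    rw [hCdef]
    nlinarith
  have hCpos : 0 < C := lt_of_lt_of_le one_pos hC1
  have hCineq : ∀ ℓ : ℕ, 1 ≤ ℓ → Real.exp (σ*(A+1)) * Q ℓ ^ ℓ ≤ C := by
    intro ℓ hℓ
    rcases le_or_gt ℓ L with hcase | hcase
    · have hmem : ℓ ∈ Finset.range (L+1) := Finset.mem_range.mpr (by omega)
      have h1 := Finset.single_le_sum (fun j _ => hQpow_nonneg j) hmem
      rw [hCdef]
      nlinarith [hexpA, hQpow_nonneg ℓ, Real.exp_pos (σ*(A+1))]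
    · have hℓpos : (0:ℝ) < (ℓ:ℝ) := by exact_mod_cast hℓ
      have hrat := hLrat ℓ (by omega)
      have hφσ := hφpos _ (by positivity : (0:ℝ) < (ℓ:ℝ)/σ)
      have hφℓ := hφpos _ hℓpos
      have hQ1 : Q ℓ ≤ 1 := by
        rw [hQdef]
        simp only
        rw [div_le_one (by positivity)]
        calc Real.exp k₀ * φ (ℓ:ℝ)
            ≤ Real.exp k₀ * (Real.exp (Real.log 2 + Real.log σ / ρ₀) * φ ((ℓ:ℝ)/σ)) := by
              gcongr
          _ = (Real.exp k₀ * Real.exp (Real.log 2 + Real.log σ / ρ₀)) * φ ((ℓ:ℝ)/σ) := by ring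
          _ ≤ W * φ ((ℓ:ℝ)/σ) := mul_le_mul_of_nonneg_right hId2 hφσ.le
          _ = φ ((ℓ:ℝ)/σ) * W := by ring
      have hQℓ1 : Q ℓ ^ ℓ ≤ 1 := pow_le_one₀ (hQpos ℓ hℓ).le hQ1
      have h2 : Real.exp (σ*(A+1)) * Q ℓ ^ ℓ ≤ Real.exp (σ*(A+1)) * 1 :=
        mul_le_mul_of_nonneg_left hQℓ1 (Real.exp_pos _).le
      rw [hCdef]
      nlinarith [hsum_nonneg, Real.exp_pos (σ*(A+1))]
  refine ⟨C, hCpos, fun f hf M hbound ℓ z => ?_⟩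
  have hM : 0 ≤ M := by
    by_contra h
    push_neg at h
    have h1 := (norm_nonneg (f z)).trans (hbound z)
    nlinarith [mul_neg_of_neg_of_pos h (Real.exp_pos (σ * ‖z‖ ^ ρ (‖z‖)))]
  set t : ℝ := ‖z‖ with ht
  set T : ℝ := t ^ ρ t with hT
  have hT0 : 0 ≤ T := Real.rpow_nonneg (norm_nonneg z) _
  rcases Nat.eq_zero_or_pos ℓ with hℓ0 | hℓ1
  · subst hℓ0
    simp only [iteratedDeriv_zero, Nat.factorial_zero, Nat.cast_one, div_one, hG0,
      Nat.cast_zero, zero_div, Real.rpow_zero, mul_one]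
    have h1 : ‖f z‖ * Real.exp (-(k * σ) * T) ≤ M := by
      calc ‖f z‖ * Real.exp (-(k * σ) * T)
          ≤ M * Real.exp (σ * T) * Real.exp (-(k * σ) * T) := by
            gcongr
            exact hbound z
        _ = M * Real.exp (σ * T + -(k*σ) * T) := by rw [Real.exp_add]; ring
        _ ≤ M * 1 := by
            gcongr
            rw [show (1:ℝ) = Real.exp 0 by simp]
            apply Real.exp_le_exp.mpr
            nlinarith [mul_nonneg (mul_nonneg (sub_nonneg.mpr hk1) hσ.le) hT0]
        _ = M := mul_one M
    calc ‖f z‖ * Real.exp (-(k * σ) * T) ≤ M := h1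
      _ ≤ C * M := by nlinarith
  · have hℓ1' : 1 ≤ ℓ := hℓ1
    have hℓpos : (0:ℝ) < (ℓ:ℝ) := by exact_mod_cast hℓ1
    have hu : 0 < (ℓ:ℝ)/σ := by positivity
    set r : ℝ := φ ((ℓ:ℝ)/σ) with hrdef
    have hrpos : 0 < r := hφpos _ hu
    have hVr : r ^ ρ r = (ℓ:ℝ)/σ := hφp _ hu
    have hφℓ : 0 < φ (ℓ:ℝ) := hφpos _ hℓpos
    set B : ℝ := M * Real.exp (k₀*σ*T + k₀*(ℓ:ℝ) + σ*(A+1)) with hBdef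
    have hB : ∀ w : ℂ, dist w z ≤ r → ‖f w‖ ≤ B := by
      intro w hw
      have hwz : ‖w‖ ≤ t + r := by
        have h1 : ‖w - z‖ ≤ r := by
          rw [← Complex.dist_eq]
          exact hw
        calc ‖w‖ = ‖z + (w - z)‖ := by ring_nf
          _ ≤ ‖z‖ + ‖w - z‖ := norm_add_le _ _
          _ ≤ t + r := by rw [ht]; gcongr
      have htr : 0 < t + r := by positivity
      have step1 : ‖w‖ ^ ρ (‖w‖) ≤ (t+r) ^ ρ (t+r) + 1 := by
        rcases eq_or_lt_of_le (norm_nonneg w) with h | h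
        · rw [← h]
          have h1 : (0:ℝ) ^ ρ 0 ≤ 1 := Real.zero_rpow_le_one _
          have h2 : 0 ≤ (t+r) ^ ρ (t+r) := Real.rpow_nonneg htr.le _
          linarith
        · have := hVmono _ _ h hwz
          linarith
      have step2 : (t+r) ^ ρ (t+r) ≤ k₀ * (max t r) ^ ρ (max t r) + A := by
        have hmaxpos : 0 < max t r := lt_max_of_lt_right hrpos
        have h1 : t + r ≤ 2 * max t r := by
          rcases max_cases t r with ⟨h, h'⟩ | ⟨h, h'⟩ <;> rw [h] <;> linarith
        have h2 := hVmono _ _ htr h1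
        have h3 := hdoub (max t r) hmaxpos
        linarith
      have step3 : (max t r) ^ ρ (max t r) ≤ T + (ℓ:ℝ)/σ := by
        rcases max_choice t r with h | h <;> rw [h]
        · rw [← hT]; linarith [hu.le]
        · rw [hVr]; linarith [hT0]
      have hcomb : ‖w‖ ^ ρ (‖w‖) ≤ k₀ * (T + (ℓ:ℝ)/σ) + A + 1 := by
        have h4 := mul_le_mul_of_nonneg_left step3 (by linarith : (0:ℝ) ≤ k₀)
        linarith
      have hexpand : σ * (k₀*(T+(ℓ:ℝ)/σ)+A+1) = k₀*σ*T + k₀*(ℓ:ℝ) + σ*(A+1) := by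
        field_simp
        ring
      have hexpineq : σ * (‖w‖ ^ ρ (‖w‖)) ≤ k₀*σ*T + k₀*(ℓ:ℝ) + σ*(A+1) := by
        have h5 := mul_le_mul_of_nonneg_left hcomb hσ.le
        linarith [hexpand, h5]
      calc ‖f w‖ ≤ M * Real.exp (σ * ‖w‖ ^ ρ (‖w‖)) := hbound w
        _ ≤ B := by
            rw [hBdef]
            gcongr
    have hcau := cauchy_est f hf z r hrpos B hB ℓ
    have hfac : (0:ℝ) < (ℓ.factorial : ℝ) := by exact_mod_cast ℓ.factorial_pos
    have hrpow : (0:ℝ) < r ^ ℓ := pow_pos hrpos ℓ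
    have hstep1 : ‖iteratedDeriv ℓ f z‖ / (ℓ.factorial:ℝ) ≤ B / r ^ ℓ := by
      rw [div_le_div_iff₀ hfac hrpow]
      rw [le_div_iff₀ hrpow] at hcau
      nlinarith [hcau]
    have hBexp : B * Real.exp (-(k*σ)*T) ≤ M * (Real.exp (σ*(A+1)) * Real.exp k₀ ^ ℓ) := by
      have hek : Real.exp k₀ ^ ℓ = Real.exp (k₀ * (ℓ:ℝ)) := by
        rw [← Real.exp_nat_mul]
        ring_nf
      rw [hBdef, hek, mul_assoc, ← Real.exp_add, ← Real.exp_add]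
      refine mul_le_mul_of_nonneg_left (Real.exp_le_exp.mpr ?_) hM
      nlinarith [mul_nonneg (mul_nonneg (sub_nonneg.mpr hkk₀) hσ.le) hT0]
    have hGℓ : G ℓ = φ (ℓ:ℝ) ^ ℓ / (Real.exp 1 * ρ₀) ^ ((ℓ:ℝ)/ρ₀) := hG ℓ hℓ1
    have hφℓpow : (0:ℝ) < φ (ℓ:ℝ) ^ ℓ := pow_pos hφℓ ℓ
    have hEρ : (0:ℝ) < (Real.exp 1 * ρ₀) ^ ((ℓ:ℝ)/ρ₀) := Real.rpow_pos_of_pos (by positivity) _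
    have hRHS : C * M * (2*k*σ) ^ ((ℓ:ℝ)/ρ₀) / G ℓ = C * M * W ^ ℓ / φ (ℓ:ℝ) ^ ℓ := by
      rw [hGℓ, ← hId1 ℓ]
      field_simp
    have hid : Real.exp (σ*(A+1)) * Real.exp k₀ ^ ℓ / r ^ ℓ
        = (Real.exp (σ*(A+1)) * Q ℓ ^ ℓ) * W ^ ℓ / φ (ℓ:ℝ) ^ ℓ := by
      rw [hQdef]
      simp only
      rw [← hrdef]
      rw [div_pow, mul_pow, mul_pow]
      field_simp
    calc ‖iteratedDeriv ℓ f z‖ / (ℓ.factorial:ℝ) * Real.exp (-(k*σ)*T)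
        ≤ B / r ^ ℓ * Real.exp (-(k*σ)*T) :=
          mul_le_mul_of_nonneg_right hstep1 (Real.exp_pos _).le
      _ = B * Real.exp (-(k*σ)*T) / r ^ ℓ := by ring
      _ ≤ M * (Real.exp (σ*(A+1)) * Real.exp k₀ ^ ℓ) / r ^ ℓ := by
          gcongr
      _ = M * (Real.exp (σ*(A+1)) * Real.exp k₀ ^ ℓ / r ^ ℓ) := by ring
      _ = M * ((Real.exp (σ*(A+1)) * Q ℓ ^ ℓ) * W ^ ℓ / φ (ℓ:ℝ) ^ ℓ) := by rw [hid]
      _ ≤ M * (C * W ^ ℓ / φ (ℓ:ℝ) ^ ℓ) := by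
          have h6 := hCineq ℓ hℓ1'
          have h7 : 0 < W ^ ℓ / φ (ℓ:ℝ) ^ ℓ := div_pos (pow_pos hWpos ℓ) hφℓpow
          have h8 : (Real.exp (σ*(A+1)) * Q ℓ ^ ℓ) * (W ^ ℓ / φ (ℓ:ℝ) ^ ℓ)
              ≤ C * (W ^ ℓ / φ (ℓ:ℝ) ^ ℓ) := mul_le_mul_of_nonneg_right h6 h7.le
          have h9 := mul_le_mul_of_nonneg_left h8 hM
          calc M * ((Real.exp (σ*(A+1)) * Q ℓ ^ ℓ) * W ^ ℓ / φ (ℓ:ℝ) ^ ℓ)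
              = M * ((Real.exp (σ*(A+1)) * Q ℓ ^ ℓ) * (W ^ ℓ / φ (ℓ:ℝ) ^ ℓ)) := by ring
            _ ≤ M * (C * (W ^ ℓ / φ (ℓ:ℝ) ^ ℓ)) := h9
            _ = M * (C * W ^ ℓ / φ (ℓ:ℝ) ^ ℓ) := by ring
      _ = C * M * W ^ ℓ / φ (ℓ:ℝ) ^ ℓ := by ring
      _ = C * M * (2*k*σ) ^ ((ℓ:ℝ)/ρ₀) / G ℓ := hRHS.symm
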